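/- Let M be a matroid on a finite ground set V with nonempty base family B, and let v ∈ ℤ^V. Let B^v = argmax_{B∈B} v(B) be the set of maximum-v-weight bases, where v(B) = Σ_{i∈B} v_i. Then for every X ⊆ V, max_{B∈B^v} |X ∩ B| = max_{B∈B} (v + 𝟏_X)(B) − max_{B∈B} v(B), where 𝟏_X is the indicator vector of X. -/

import Mathlib

/-- A matroid on a finite ground set `V`, given by its nonempty family of bases
satisfying the symmetric exchange axiom: for any bases `B₁, B₂` and `i ∈ B₁ \ B₂`
there is `j ∈ B₂ \ B₁` with `B₁ \ {i} ∪ {j}` and `B₂ \ {j} ∪ {i}` both bases. -/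
structure BaseFamily (V : Type*) [DecidableEq V] where
  bases : Finset (Finset V)
  nonempty : bases.Nonempty
  exchange : ∀ B₁ ∈ bases, ∀ B₂ ∈ bases, ∀ i ∈ B₁ \ B₂, ∃ j ∈ B₂ \ B₁,
    insert j (B₁.erase i) ∈ bases ∧ insert i (B₂.erase j) ∈ bases

/-- The maximum `v`-weight `max_{B ∈ B} v(B)` of a base. -/
def BaseFamily.maxWeight {V : Type*} [DecidableEq V] (M : BaseFamily V) (v : V → ℤ) : ℤ :=
  M.bases.sup' M.nonempty fun B => ∑ i ∈ B, v i

/-- The family `B^v = argmax_{B ∈ B} v(B)` of maximum-`v`-weight bases. -/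
def BaseFamily.argmax {V : Type*} [DecidableEq V] (M : BaseFamily V) (v : V → ℤ) :
    Finset (Finset V) :=
  M.bases.filter fun B => ∑ i ∈ B, v i = M.maxWeight v

lemma BaseFamily.argmax_nonempty {V : Type*} [DecidableEq V] (M : BaseFamily V) (v : V → ℤ) :
    (M.argmax v).Nonempty := by
  obtain ⟨B, hB, hEq⟩ := Finset.exists_mem_eq_sup' M.nonempty fun B : Finset V => ∑ i ∈ B, v i
  exact ⟨B, Finset.mem_filter.2 ⟨hB, hEq.symm⟩⟩

/-- A base contained in another base equals it. -/
lemma BaseFamily.base_subset_eq {V : Type*} [DecidableEq V] (M : BaseFamily V)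
    {B₁ B₂ : Finset V} (h₁ : B₁ ∈ M.bases) (h₂ : B₂ ∈ M.bases) (hsub : B₁ ⊆ B₂) :
    B₁ = B₂ := by
  by_contra hne
  obtain ⟨i, hiB₂, hiB₁⟩ : ∃ i ∈ B₂, i ∉ B₁ := by
    by_contra h
    push_neg at h
    exact hne (Finset.Subset.antisymm hsub h)
  obtain ⟨j, hj, -⟩ := M.exchange B₂ h₂ B₁ h₁ i (Finset.mem_sdiff.2 ⟨hiB₂, hiB₁⟩)
  rw [Finset.mem_sdiff] at hj
  exact hj.2 (hsub hj.1)

lemma sum_exchange {V : Type*} [DecidableEq V] (f : V → ℤ) {B : Finset V} {i j : V}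
    (hjB : j ∈ B) (hiB : i ∉ B) :
    ∑ x ∈ insert i (B.erase j), f x = ∑ x ∈ B, f x + f i - f j := by
  have hij : i ∉ B.erase j := fun h => hiB (Finset.mem_of_mem_erase h)
  rw [Finset.sum_insert hij, Finset.sum_erase_eq_sub hjB]
  ring

/-- There is a base that simultaneously maximizes `v`-weight and `(v + 𝟏_X)`-weight. -/
lemma BaseFamily.exists_double_max {V : Type*} [DecidableEq V] (M : BaseFamily V)
    (v : V → ℤ) (X : Finset V) :
    ∃ B ∈ M.bases, ∑ i ∈ B, v i = M.maxWeight v ∧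
      ∑ i ∈ B, (v i + if i ∈ X then 1 else 0) =
        M.bases.sup' M.nonempty (fun B => ∑ i ∈ B, (v i + if i ∈ X then 1 else 0)) := by
  set w : V → ℤ := fun i => v i + if i ∈ X then 1 else 0 with hw
  -- choose B in argmax v with maximal |X ∩ B|
  obtain ⟨B, hBmem, hBsec⟩ := Finset.exists_mem_eq_sup' (M.argmax_nonempty v)
    (fun B : Finset V => (X ∩ B).card)
  rw [BaseFamily.argmax, Finset.mem_filter] at hBmem
  obtain ⟨hB, hBv⟩ := hBmem
  refine ⟨B, hB, hBv, ?_⟩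
  -- main claim: B maximizes w among bases
  have main : ∀ n (B' : Finset V), B' ∈ M.bases → (B' \ B).card = n →
      ∑ x ∈ B', w x ≤ ∑ x ∈ B, w x := by
    intro n
    induction n using Nat.strong_induction_on with
    | _ n ih =>
      intro B' hB' hn
      rcases Finset.eq_empty_or_nonempty (B' \ B) with hdiff | ⟨i, hi⟩
      · have : B' = B := M.base_subset_eq hB' hB (Finset.sdiff_eq_empty_iff_subset.1 hdiff)
        rw [this]
      · obtain ⟨j, hj, hB₄, hB₅⟩ := M.exchange B' hB' B hB i hi
        rw [Finset.mem_sdiff] at hi hj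
        obtain ⟨hiB', hiB⟩ := hi
        obtain ⟨hjB, hjB'⟩ := hj
        -- v-maximality of B gives v i ≤ v j
        have hvB₅ := Finset.le_sup' (fun B : Finset V => ∑ i ∈ B, v i) hB₅
        rw [sum_exchange v hjB hiB, show (M.bases.sup' M.nonempty fun B => ∑ i ∈ B, v i)
          = M.maxWeight v from rfl, hBv] at hvB₅
        have hvij : v i ≤ v j := by linarith
        -- claim w i ≤ w j
        have hwij : w i ≤ w j := by
          by_contra hlt
          push_neg at hlt
          have hfacts : i ∈ X ∧ j ∉ X ∧ v i = v j := by
            simp only [hw] at hlt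
            by_cases h1 : i ∈ X <;> by_cases h2 : j ∈ X <;>
              simp only [h1, h2, if_true, if_false] at hlt <;> refine ⟨?_, ?_, ?_⟩ <;>
              first | assumption | omega | simp [h1, h2]
          obtain ⟨hiX, hjX, hvij'⟩ := hfacts
          -- B₅ is also in argmax v with larger |X ∩ ·|, contradiction with hBsec
          have hB₅v : ∑ x ∈ insert i (B.erase j), v x = M.maxWeight v := by
            rw [sum_exchange v hjB hiB, hBv]; omega
          have hB₅arg : insert i (B.erase j) ∈ M.argmax v :=
            Finset.mem_filter.2 ⟨hB₅, hB₅v⟩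
          have hinter : X ∩ insert i (B.erase j) = insert i (X ∩ B) := by
            ext a
            simp only [Finset.mem_inter, Finset.mem_insert, Finset.mem_erase]
            constructor
            · rintro ⟨haX, rfl | ⟨-, haB⟩⟩
              · exact Or.inl rfl
              · exact Or.inr ⟨haX, haB⟩
            · rintro (rfl | ⟨haX, haB⟩)
              · exact ⟨hiX, Or.inl rfl⟩
              · exact ⟨haX, Or.inr ⟨fun h => hjX (h ▸ haX), haB⟩⟩
          have hcard : (X ∩ insert i (B.erase j)).card = (X ∩ B).card + 1 := by
            rw [hinter, Finset.card_insert_of_notMem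
              (fun h => hiB (Finset.mem_inter.1 h).2)]
          have := Finset.le_sup' (fun B : Finset V => (X ∩ B).card) hB₅arg
          rw [hBsec] at this
          omega
        -- B₄ = insert j (B'.erase i) has smaller diff with B
        have hij : i ≠ j := fun h => hiB (h ▸ hjB)
        have hdiff4 : ((insert j (B'.erase i)) \ B).card < n := by
          have hsub : (insert j (B'.erase i)) \ B = (B' \ B).erase i := by
            ext a
            simp only [Finset.mem_sdiff, Finset.mem_insert, Finset.mem_erase]
            constructor
            · rintro ⟨rfl | ⟨hai, haB'⟩, haB⟩
              · exact absurd hjB haB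
              · exact ⟨hai, haB', haB⟩
            · rintro ⟨hai, haB', haB⟩
              exact ⟨Or.inr ⟨hai, haB'⟩, haB⟩
          rw [hsub, ← hn]
          exact Finset.card_erase_lt_of_mem (Finset.mem_sdiff.2 ⟨hiB', hiB⟩)
        have hIH := ih _ hdiff4 _ hB₄ rfl
        rw [sum_exchange w hiB' hjB'] at hIH
        linarith
  -- conclude
  have h1 : ∑ x ∈ B, w x ≤ M.bases.sup' M.nonempty fun B => ∑ i ∈ B, w i :=
    Finset.le_sup' (fun B : Finset V => ∑ i ∈ B, w i) hB
  have h2 : (M.bases.sup' M.nonempty fun B => ∑ i ∈ B, w i) ≤ ∑ x ∈ B, w x := by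
    apply Finset.sup'_le
    intro B' hB'
    exact main _ B' hB' rfl
  exact le_antisymm h1 h2

/-- Rank-function of the matroid `M^v` of maximum-`v`-weight bases: for every `X ⊆ V`,
`max_{B ∈ B^v} |X ∩ B| = max_{B ∈ B} (v + 𝟏_X)(B) − max_{B ∈ B} v(B)`. -/
theorem stmt8 {V : Type*} [DecidableEq V] [Fintype V] [Nonempty V]
    (M : BaseFamily V) (v : V → ℤ) (X : Finset V) :
    (M.argmax v).sup' (M.argmax_nonempty v) (fun B => ((X ∩ B).card : ℤ)) =
      M.bases.sup' M.nonempty (fun B => ∑ i ∈ B, (v i + if i ∈ X then 1 else 0)) -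
        M.maxWeight v := by
  have hsplit : ∀ B : Finset V,
      ∑ i ∈ B, (v i + if i ∈ X then 1 else 0) = ∑ i ∈ B, v i + ((X ∩ B).card : ℤ) := by
    intro B
    rw [Finset.sum_add_distrib]
    congr 1
    rw [Finset.sum_boole, Finset.filter_mem_eq_inter, Finset.inter_comm]
  apply le_antisymm
  · apply Finset.sup'_le
    intro B hBarg
    have hBm := Finset.mem_filter.1 hBarg
    have h := Finset.le_sup' (fun B : Finset V =>
      ∑ i ∈ B, (v i + if i ∈ X then 1 else 0)) hBm.1
    rw [hsplit B] at h
    linarith [h, hBm.2]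
  · obtain ⟨B, hB, hBv, hBw⟩ := M.exists_double_max v X
    have hBarg : B ∈ M.argmax v := Finset.mem_filter.2 ⟨hB, hBv⟩
    have h := Finset.le_sup' (fun B : Finset V => ((X ∩ B).card : ℤ)) hBarg
    linarith [h, hBw, hsplit B, hBv]
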